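/- For fixed k, fixed V and every integer r ≥ 1, the canonical moments ⟨N_k^r⟩_V^C(n/V) of the perfect Bose gas are monotonically increasing in the particle number n. -/

import Mathlib

/-- Canonical partition function of the perfect Bose gas: the sum over occupation
sequences (finitely supported functions ℕ → ℕ) with total particle number n of the
Boltzmann weight exp(-β Σ_k n_k E_k). -/
noncomputable def Zcan (β : ℝ) (E : ℕ → ℝ) (n : ℕ) : ℝ :=
  ∑' f : {f : ℕ →₀ ℕ // f.sum (fun _ m => m) = n},
    Real.exp (-β * (f : ℕ →₀ ℕ).sum (fun k m => (m : ℝ) * E k))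
/-- Canonical expectation of g(N_k) in the n-particle perfect Bose gas. -/
noncomputable def canExp (β : ℝ) (E : ℕ → ℝ) (n k : ℕ) (g : ℕ → ℝ) : ℝ :=
  (Zcan β E n)⁻¹ * ∑' f : {f : ℕ →₀ ℕ // f.sum (fun _ m => m) = n},
    g ((f : ℕ →₀ ℕ) k) * Real.exp (-β * (f : ℕ →₀ ℕ).sum (fun j m => (m : ℝ) * E j))

open scoped Classical

namespace BoseProof

open ENNReal Finsupp

noncomputable def ind (p : Prop) (a : ℝ≥0∞) : ℝ≥0∞ := if p then a else 0

lemma ind_of {p : Prop} (h : p) (a : ℝ≥0∞) : ind p a = a := if_pos h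
lemma ind_of_not {p : Prop} (h : ¬ p) (a : ℝ≥0∞) : ind p a = 0 := if_neg h
lemma ind_congr {p q : Prop} (h : p ↔ q) (a : ℝ≥0∞) : ind p a = ind q a :=
  if_congr h rfl rfl
lemma ind_mono {p q : Prop} (h : p → q) (a : ℝ≥0∞) : ind p a ≤ ind q a := by
  by_cases hp : p
  · rw [ind_of hp, ind_of (h hp)]
  · rw [ind_of_not hp]; exact zero_le
lemma mul_ind (c : ℝ≥0∞) (p : Prop) (a : ℝ≥0∞) : c * ind p a = ind p (c * a) := by
  by_cases hp : p <;> simp [ind, hp]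
lemma ind_le (p : Prop) (a : ℝ≥0∞) : ind p a ≤ a := by
  by_cases hp : p <;> simp [ind, hp]

variable (β : ℝ) (E : ℕ → ℝ)

noncomputable def xw (j : ℕ) : ℝ≥0∞ := ENNReal.ofReal (Real.exp (-β * E j))

lemma xw_pos (j : ℕ) : 0 < xw β E j := ENNReal.ofReal_pos.mpr (Real.exp_pos _)
lemma xw_ne_top (j : ℕ) : xw β E j ≠ ∞ := ENNReal.ofReal_ne_top

noncomputable def W (f : ℕ →₀ ℕ) : ℝ≥0∞ := f.prod fun j m => xw β E j ^ m

def NS (f : ℕ →₀ ℕ) : ℕ := f.sum fun _ m => m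

lemma NS_add (f g : ℕ →₀ ℕ) : NS (f + g) = NS f + NS g :=
  Finsupp.sum_add_index' (fun _ => rfl) (fun _ _ _ => rfl)

lemma NS_single (k m : ℕ) : NS (Finsupp.single k m) = m :=
  Finsupp.sum_single_index rfl

lemma NS_zero : NS 0 = 0 := rfl

lemma NS_eq_zero {f : ℕ →₀ ℕ} (h : NS f = 0) : f = 0 := by
  ext j
  by_cases hj : j ∈ f.support
  · have := Finset.sum_eq_zero_iff.mp h j hj
    simpa using this
  · simpa using Finsupp.notMem_support_iff.mp hj

lemma apply_le_NS (f : ℕ →₀ ℕ) (k : ℕ) : f k ≤ NS f := by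
  by_cases hk : k ∈ f.support
  · exact Finset.single_le_sum (f := fun j => f j) (fun _ _ => Nat.zero_le _) hk
  · simp [Finsupp.notMem_support_iff.mp hk]

lemma W_add (f g : ℕ →₀ ℕ) : W β E (f + g) = W β E f * W β E g :=
  Finsupp.prod_add_index' (fun _ => pow_zero _) (fun _ _ _ => pow_add _ _ _)

lemma W_single (k m : ℕ) : W β E (Finsupp.single k m) = xw β E k ^ m :=
  Finsupp.prod_single_index (pow_zero _)

lemma W_zero : W β E 0 = 1 := rfl

lemma W_ne_top (f : ℕ →₀ ℕ) : W β E f ≠ ∞ :=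
  ENNReal.prod_ne_top fun j _ => ENNReal.pow_ne_top (xw_ne_top β E j)

lemma addSingle_injective (k m : ℕ) :
    Function.Injective (fun g : ℕ →₀ ℕ => g + Finsupp.single k m) := by
  intro g g' h
  ext j
  have := DFunLike.congr_fun h j
  simp only [Finsupp.add_apply] at this
  omega

lemma sub_add_single {f : ℕ →₀ ℕ} {k m : ℕ} (h : m ≤ f k) :
    (f - Finsupp.single k m) + Finsupp.single k m = f := by
  ext j
  by_cases hj : j = k
  · subst hj
    simp [Finsupp.tsub_apply, Finsupp.add_apply, Nat.sub_add_cancel h]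
  · simp [Finsupp.tsub_apply, Finsupp.add_apply, Finsupp.single_eq_of_ne' (Ne.symm hj)]

lemma shift (k m n : ℕ) (P : (ℕ →₀ ℕ) → Prop)
    (hP : ∀ g, P (g + Finsupp.single k m) ↔ P g) :
    (∑' f : ℕ →₀ ℕ, ind (NS f = n + m ∧ m ≤ f k ∧ P f) (W β E f))
      = xw β E k ^ m * ∑' g : ℕ →₀ ℕ, ind (NS g = n ∧ P g) (W β E g) := by
  set T : (ℕ →₀ ℕ) → ℝ≥0∞ := fun f => ind (NS f = n + m ∧ m ≤ f k ∧ P f) (W β E f) with hT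
  have key : ∀ g : ℕ →₀ ℕ, T (g + Finsupp.single k m)
      = ind (NS g = n ∧ P g) (xw β E k ^ m * W β E g) := by
    intro g
    have h1 : NS (g + Finsupp.single k m) = NS g + m := by rw [NS_add, NS_single]
    have h2 : m ≤ (g + Finsupp.single k m) k := by
      simp [Finsupp.add_apply]
    have h3 : (NS (g + Finsupp.single k m) = n + m ∧ m ≤ (g + Finsupp.single k m) k
        ∧ P (g + Finsupp.single k m)) ↔ (NS g = n ∧ P g) := by
      rw [h1, hP]
      constructor
      · rintro ⟨ha, _, hb⟩; exact ⟨by omega, hb⟩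
      · rintro ⟨ha, hb⟩; exact ⟨by omega, h2, hb⟩
    rw [hT]
    simp only
    rw [ind_congr h3, W_add, W_single, mul_comm]
  have hsupp : Function.support T ⊆ Set.range (fun g : ℕ →₀ ℕ => g + Finsupp.single k m) := by
    intro f hf
    have hcond : NS f = n + m ∧ m ≤ f k ∧ P f := by
      by_contra hc
      exact hf (ind_of_not hc _)
    exact ⟨f - Finsupp.single k m, sub_add_single hcond.2.1⟩
  calc (∑' f : ℕ →₀ ℕ, T f)
      = ∑' g : ℕ →₀ ℕ, T (g + Finsupp.single k m) :=
        (Function.Injective.tsum_eq (addSingle_injective k m) hsupp).symm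
    _ = ∑' g : ℕ →₀ ℕ, ind (NS g = n ∧ P g) (xw β E k ^ m * W β E g) := tsum_congr key
    _ = xw β E k ^ m * ∑' g : ℕ →₀ ℕ, ind (NS g = n ∧ P g) (W β E g) := by
        rw [← ENNReal.tsum_mul_left]
        refine tsum_congr fun g => ?_
        by_cases h : NS g = n ∧ P g <;> simp [ind, h]

noncomputable def Zf (n : ℕ) : ℝ≥0∞ := ∑' f : ℕ →₀ ℕ, ind (NS f = n) (W β E f)

noncomputable def ZR (N n : ℕ) : ℝ≥0∞ :=
  ∑' f : ℕ →₀ ℕ, ind (NS f = n ∧ f.support ⊆ Finset.range N) (W β E f)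

lemma Zf_shift (k m n : ℕ) :
    (∑' f : ℕ →₀ ℕ, ind (NS f = n + m ∧ m ≤ f k) (W β E f)) = xw β E k ^ m * Zf β E n := by
  have := shift β E k m n (fun _ => True) (fun _ => Iff.rfl)
  rw [Zf]
  refine Eq.trans ?_ (this.trans ?_)
  · exact tsum_congr fun f => ind_congr (by tauto) _
  · congr 1
    exact tsum_congr fun f => ind_congr (by tauto) _

lemma ZR_mono_N {N M : ℕ} (h : N ≤ M) (n : ℕ) : ZR β E N n ≤ ZR β E M n :=
  ENNReal.tsum_le_tsum fun f => ind_mono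
    (fun hc => ⟨hc.1, hc.2.trans (Finset.range_subset_range.mpr h)⟩) _

lemma ZR_le_Zf (N n : ℕ) : ZR β E N n ≤ Zf β E n :=
  ENNReal.tsum_le_tsum fun f => ind_mono (fun hc => hc.1) _

lemma support_subset_singleton {f : ℕ →₀ ℕ} (h : f.support ⊆ Finset.range 1) :
    f = Finsupp.single 0 (f 0) := by
  ext j
  rcases Nat.eq_zero_or_pos j with hj | hj
  · subst hj; simp
  · have : j ∉ f.support := fun hmem => by
      have := h hmem; simp at this; omega
    rw [Finsupp.notMem_support_iff.mp this, Finsupp.single_eq_of_ne' (by omega)]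

lemma ZR_zero_n (N : ℕ) : ZR β E N 0 = 1 := by
  rw [ZR]
  rw [tsum_eq_single 0]
  · rw [ind_of ⟨NS_zero, by simp⟩, W_zero]
  · intro f hf
    refine ind_of_not (fun hc => hf (NS_eq_zero hc.1)) _

lemma Zf_zero : Zf β E 0 = 1 := by
  rw [Zf]
  rw [tsum_eq_single 0]
  · rw [ind_of NS_zero, W_zero]
  · intro f hf
    refine ind_of_not (fun hc => hf (NS_eq_zero hc)) _

lemma ZR_one (n : ℕ) : ZR β E 1 n = xw β E 0 ^ n := by
  rw [ZR]
  rw [tsum_eq_single (Finsupp.single 0 n)]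
  · rw [ind_of ⟨NS_single 0 n, (Finsupp.support_single_subset).trans (by simp)⟩, W_single]
  · intro f hf
    refine ind_of_not (fun hc => hf ?_) _
    rw [support_subset_singleton hc.2]
    have : NS f = f 0 := by
      conv_lhs => rw [support_subset_singleton hc.2]
      rw [NS_single]
    rw [← this, hc.1]

lemma ZR_pos {N : ℕ} (hN : 1 ≤ N) (n : ℕ) : 0 < ZR β E N n :=
  lt_of_lt_of_le (by rw [ZR_one]; exact ENNReal.pow_pos (xw_pos β E 0) n) (ZR_mono_N β E hN n)

lemma support_add_single_subset_iff {g : ℕ →₀ ℕ} {N : ℕ} :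
    (g + Finsupp.single N 1).support ⊆ Finset.range (N + 1) ↔
      g.support ⊆ Finset.range (N + 1) := by
  constructor
  · intro h j hj
    refine h ?_
    rw [Finsupp.mem_support_iff, Finsupp.add_apply]
    have := Finsupp.mem_support_iff.mp hj
    omega
  · intro h j hj
    rw [Finsupp.mem_support_iff, Finsupp.add_apply] at hj
    by_cases hjN : j = N
    · subst hjN; simp
    · rw [Finsupp.single_eq_of_ne' (Ne.symm hjN)] at hj
      exact h (Finsupp.mem_support_iff.mpr (by omega))

lemma ZR_rec (N n : ℕ) :
    ZR β E (N + 1) (n + 1) = ZR β E N (n + 1) + xw β E N * ZR β E (N + 1) n := by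
  have split : ∀ f : ℕ →₀ ℕ,
      ind (NS f = n + 1 ∧ f.support ⊆ Finset.range (N + 1)) (W β E f)
        = ind (NS f = n + 1 ∧ f.support ⊆ Finset.range N) (W β E f)
          + ind (NS f = n + 1 ∧ 1 ≤ f N ∧ f.support ⊆ Finset.range (N + 1)) (W β E f) := by
    intro f
    by_cases hN : f N = 0
    · have h1 : (NS f = n + 1 ∧ f.support ⊆ Finset.range (N + 1)) ↔
          (NS f = n + 1 ∧ f.support ⊆ Finset.range N) := by
        constructor
        · rintro ⟨ha, hb⟩
          refine ⟨ha, fun j hj => ?_⟩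
          have h2 := hb hj
          have h3 : j ≠ N := fun hjN => by
            rw [hjN] at hj; exact Finsupp.mem_support_iff.mp hj hN
          simp only [Finset.mem_range] at *
          omega
        · rintro ⟨ha, hb⟩
          exact ⟨ha, hb.trans (Finset.range_subset_range.mpr (by omega))⟩
      have h2 : ¬ (NS f = n + 1 ∧ 1 ≤ f N ∧ f.support ⊆ Finset.range (N + 1)) :=
        fun hc => absurd hc.2.1 (by omega)
      rw [ind_of_not h2, add_zero]
      exact ind_congr h1 _
    · have h1 : ¬ (NS f = n + 1 ∧ f.support ⊆ Finset.range N) := by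
        rintro ⟨_, hb⟩
        have : N ∈ f.support := Finsupp.mem_support_iff.mpr hN
        have := hb this
        simp at this
      rw [ind_of_not h1, zero_add]
      exact ind_congr ⟨fun hc => ⟨hc.1, by omega, hc.2⟩, fun hc => ⟨hc.1, hc.2.2⟩⟩ _
  rw [ZR, ZR]
  calc (∑' f : ℕ →₀ ℕ, ind (NS f = n + 1 ∧ f.support ⊆ Finset.range (N + 1)) (W β E f))
      = (∑' f : ℕ →₀ ℕ, ind (NS f = n + 1 ∧ f.support ⊆ Finset.range N) (W β E f))
        + ∑' f : ℕ →₀ ℕ, ind (NS f = n + 1 ∧ 1 ≤ f N ∧ f.support ⊆ Finset.range (N + 1))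
            (W β E f) := by
        rw [← ENNReal.tsum_add]
        exact tsum_congr split
    _ = _ := by
        congr 1
        have := shift β E N 1 n (fun g => g.support ⊆ Finset.range (N + 1))
          (fun g => support_add_single_subset_iff)
        beta_reduce at this
        rw [pow_one] at this
        rw [ZR]
        exact this

lemma Zf_eq_iSup (n : ℕ) : Zf β E n = ⨆ N, ZR β E N n := by
  apply le_antisymm
  · rw [Zf, ENNReal.tsum_eq_iSup_sum]
    refine iSup_le fun s => ?_
    set N : ℕ := s.sup (fun f => f.support.sup id + 1) with hN
    refine le_trans ?_ (le_iSup _ N)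
    refine le_trans (Finset.sum_le_sum (g := fun f =>
      ind (NS f = n ∧ f.support ⊆ Finset.range N) (W β E f)) fun f hf => ?_)
      (ENNReal.sum_le_tsum s)
    refine ind_mono (fun hc => ⟨hc, fun j hj => ?_⟩) _
    have h1 : j ≤ f.support.sup id := Finset.le_sup (f := id) hj
    have h2 : f.support.sup id + 1 ≤ N := Finset.le_sup (f := fun f => f.support.sup id + 1) hf
    simp only [Finset.mem_range]
    omega
  · exact iSup_le fun N => ZR_le_Zf β E N n

lemma Zf_pos (n : ℕ) : 0 < Zf β E n := by
  rw [Zf_eq_iSup]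
  exact lt_of_lt_of_le (ZR_pos β E le_rfl n) (le_iSup (fun N => ZR β E N n) 1)

lemma xw_tsum_ne_top (hsum : Summable fun k => Real.exp (-β * E k)) :
    (∑' j, xw β E j) ≠ ∞ := by
  simp only [xw]
  rw [← ENNReal.ofReal_tsum_of_nonneg (fun j => (Real.exp_pos _).le) hsum]
  exact ENNReal.ofReal_ne_top

lemma Zf_le_mul (n : ℕ) : Zf β E (n + 1) ≤ (∑' j, xw β E j) * Zf β E n := by
  have key : ∀ f : ℕ →₀ ℕ, ind (NS f = n + 1) (W β E f)
      ≤ ∑' k : ℕ, ind (NS f = n + 1 ∧ 1 ≤ f k) (W β E f) := by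
    intro f
    by_cases hc : NS f = n + 1
    · have hf0 : f ≠ 0 := fun h => by rw [h] at hc; exact absurd hc (by simp [NS_zero])
      obtain ⟨k, hk⟩ := Finsupp.support_nonempty_iff.mpr hf0
      have hfk : 1 ≤ f k := Nat.one_le_iff_ne_zero.mpr (Finsupp.mem_support_iff.mp hk)
      calc ind (NS f = n + 1) (W β E f) = ind (NS f = n + 1 ∧ 1 ≤ f k) (W β E f) :=
            ind_congr (by tauto) _
        _ ≤ _ := ENNReal.le_tsum k
    · rw [ind_of_not hc]; exact zero_le
  calc Zf β E (n + 1) ≤ ∑' f : ℕ →₀ ℕ, ∑' k : ℕ, ind (NS f = n + 1 ∧ 1 ≤ f k) (W β E f) :=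
        ENNReal.tsum_le_tsum key
    _ = ∑' k : ℕ, ∑' f : ℕ →₀ ℕ, ind (NS f = n + 1 ∧ 1 ≤ f k) (W β E f) := ENNReal.tsum_comm
    _ = ∑' k : ℕ, xw β E k * Zf β E n := by
        refine tsum_congr fun k => ?_
        have := Zf_shift β E k 1 n
        rw [pow_one] at this
        exact this
    _ = _ := ENNReal.tsum_mul_right

lemma Zf_ne_top (hsum : Summable fun k => Real.exp (-β * E k)) (n : ℕ) : Zf β E n ≠ ∞ := by
  induction n with
  | zero => rw [Zf_zero]; exact one_ne_top
  | succ n ih =>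
      refine ne_top_of_le_ne_top ?_ (Zf_le_mul β E n)
      exact ENNReal.mul_ne_top (xw_tsum_ne_top β E hsum) ih

lemma logconc_rec (a c : ℕ → ℝ≥0∞) (x : ℝ≥0∞)
    (hapos : ∀ n, 0 < a n) (hafin : ∀ n, a n ≠ ∞)
    (ha : ∀ n, a n * a (n + 2) ≤ a (n + 1) ^ 2)
    (hc0 : c 0 = a 0) (hcr : ∀ n, c (n + 1) = a (n + 1) + x * c n) :
    ∀ n, c n * c (n + 2) ≤ c (n + 1) ^ 2 := by
  have K : ∀ n, c n * a (n + 2) ≤ a (n + 1) * c (n + 1) := by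
    intro n
    induction n with
    | zero =>
        calc c 0 * a 2 = a 0 * a 2 := by rw [hc0]
          _ ≤ a 1 ^ 2 := ha 0
          _ = a 1 * a 1 := sq (a 1) ▸ by ring
          _ ≤ a 1 * c 1 := by
              refine mul_le_mul_right ?_ _
              rw [hcr 0]
              exact le_add_right le_rfl
    | succ n ih =>
        have step : c n * a (n + 3) ≤ a (n + 2) * c (n + 1) := by
          rw [← ENNReal.mul_le_mul_iff_left (hapos (n + 2)).ne' (hafin (n + 2))]
          calc c n * a (n + 3) * a (n + 2) = (c n * a (n + 2)) * a (n + 3) := by ring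
            _ ≤ (a (n + 1) * c (n + 1)) * a (n + 3) := mul_le_mul_left ih _
            _ = c (n + 1) * (a (n + 1) * a (n + 3)) := by ring
            _ ≤ c (n + 1) * a (n + 2) ^ 2 := mul_le_mul_right (ha (n + 1)) _
            _ = a (n + 2) * c (n + 1) * a (n + 2) := by ring
        calc c (n + 1) * a (n + 3) = a (n + 1) * a (n + 3) + x * (c n * a (n + 3)) := by
              rw [hcr n]; ring
          _ ≤ a (n + 2) ^ 2 + x * (a (n + 2) * c (n + 1)) :=
              add_le_add (ha (n + 1)) (mul_le_mul_right step _)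
          _ = a (n + 2) * c (n + 2) := by rw [hcr (n + 1)]; ring
  intro n
  calc c n * c (n + 2) = c n * a (n + 2) + x * (c n * c (n + 1)) := by rw [hcr (n + 1)]; ring
    _ ≤ a (n + 1) * c (n + 1) + x * (c n * c (n + 1)) := add_le_add_left (K n) _
    _ = c (n + 1) ^ 2 := by rw [hcr n]; ring

lemma ZR_logconc (hsum : Summable fun k => Real.exp (-β * E k)) (N : ℕ) (n : ℕ) :
    ZR β E (N + 1) n * ZR β E (N + 1) (n + 2) ≤ ZR β E (N + 1) (n + 1) ^ 2 := by
  induction N generalizing n with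
  | zero =>
      simp only [show (0:ℕ) + 1 = 1 from rfl, ZR_one]
      rw [← pow_add, ← pow_mul]
      exact le_of_eq (by ring_nf)
  | succ N ih =>
      refine logconc_rec (ZR β E (N + 1)) (ZR β E (N + 2)) (xw β E (N + 1))
        (fun m => ZR_pos β E (by omega) m)
        (fun m => ne_top_of_le_ne_top (Zf_ne_top β E hsum m) (ZR_le_Zf β E _ m))
        ih ?_ (fun m => ZR_rec β E (N + 1) m) n
      rw [ZR_zero_n, ZR_zero_n]

lemma Zf_logconc (hsum : Summable fun k => Real.exp (-β * E k)) (n : ℕ) :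
    Zf β E n * Zf β E (n + 2) ≤ Zf β E (n + 1) ^ 2 := by
  rw [Zf_eq_iSup β E n, Zf_eq_iSup β E (n + 2), ENNReal.iSup_mul]
  refine iSup_le fun i => ?_
  rw [ENNReal.mul_iSup]
  refine iSup_le fun j => ?_
  calc ZR β E i n * ZR β E j (n + 2)
      ≤ ZR β E (max i j + 1) n * ZR β E (max i j + 1) (n + 2) :=
        mul_le_mul' (ZR_mono_N β E (by omega) n) (ZR_mono_N β E (by omega) (n + 2))
    _ ≤ ZR β E (max i j + 1) (n + 1) ^ 2 := ZR_logconc β E hsum _ n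
    _ ≤ Zf β E (n + 1) ^ 2 := pow_le_pow_left' (ZR_le_Zf β E _ (n + 1)) 2

lemma Zf_ratio (hsum : Summable fun k => Real.exp (-β * E k)) :
    ∀ i j : ℕ, i ≤ j → Zf β E (j + 1) * Zf β E i ≤ Zf β E j * Zf β E (i + 1) := by
  intro i j hij
  induction j, hij using Nat.le_induction with
  | base => rw [mul_comm]
  | succ j hij ih =>
      rw [← ENNReal.mul_le_mul_iff_left (Zf_pos β E (j + 1)).ne' (Zf_ne_top β E hsum (j + 1))]
      calc Zf β E (j + 2) * Zf β E i * Zf β E (j + 1)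
          = Zf β E (j + 2) * (Zf β E (j + 1) * Zf β E i) := by ring
        _ ≤ Zf β E (j + 2) * (Zf β E j * Zf β E (i + 1)) := mul_le_mul_right ih _
        _ = (Zf β E j * Zf β E (j + 2)) * Zf β E (i + 1) := by ring
        _ ≤ Zf β E (j + 1) ^ 2 * Zf β E (i + 1) := mul_le_mul_left (Zf_logconc β E hsum j) _
        _ = Zf β E (j + 1) * Zf β E (i + 1) * Zf β E (j + 1) := by ring

lemma layer_nat (r : ℕ) (hr : 1 ≤ r) (t n : ℕ) (htn : t ≤ n) :
    (∑ m ∈ Finset.range n, if m + 1 ≤ t then (m + 1) ^ r - m ^ r else 0) = t ^ r := by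
  have hfilter : (Finset.range n).filter (fun m => m + 1 ≤ t) = Finset.range t := by
    ext m
    simp only [Finset.mem_filter, Finset.mem_range]
    omega
  rw [← Finset.sum_filter, hfilter]
  clear hfilter htn
  induction t with
  | zero => rw [Finset.sum_range_zero, Nat.zero_pow (by omega : 0 < r)]
  | succ t ih =>
      rw [Finset.sum_range_succ, ih]
      have : t ^ r ≤ (t + 1) ^ r := Nat.pow_le_pow_left (by omega) r
      omega

noncomputable def Num (k r n : ℕ) : ℝ≥0∞ :=
  ∑' f : ℕ →₀ ℕ, ind (NS f = n) ((f k : ℝ≥0∞) ^ r * W β E f)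

lemma Num_eq (k r : ℕ) (hr : 1 ≤ r) (n : ℕ) :
    Num β E k r n = ∑ m ∈ Finset.range n,
      (((m + 1) ^ r - m ^ r : ℕ) : ℝ≥0∞) * (xw β E k ^ (m + 1) * Zf β E (n - (m + 1))) := by
  have pointwise : ∀ f : ℕ →₀ ℕ, ind (NS f = n) ((f k : ℝ≥0∞) ^ r * W β E f)
      = ∑ m ∈ Finset.range n,
          ind (NS f = n ∧ m + 1 ≤ f k) ((((m + 1) ^ r - m ^ r : ℕ) : ℝ≥0∞) * W β E f) := by
    intro f
    by_cases hc : NS f = n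
    · have hfk : f k ≤ n := hc ▸ apply_le_NS f k
      have hcast : (f k : ℝ≥0∞) ^ r
          = ∑ m ∈ Finset.range n, ind (m + 1 ≤ f k) (((m + 1) ^ r - m ^ r : ℕ) : ℝ≥0∞) := by
        have := layer_nat r hr (f k) n hfk
        calc (f k : ℝ≥0∞) ^ r = ((f k ^ r : ℕ) : ℝ≥0∞) := by push_cast; ring
          _ = ((∑ m ∈ Finset.range n, if m + 1 ≤ f k then (m + 1) ^ r - m ^ r else 0 : ℕ) : ℝ≥0∞) := by
              rw [this]
          _ = _ := by
              push_cast
              refine Finset.sum_congr rfl fun m _ => ?_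
              by_cases h : m + 1 ≤ f k <;> simp [ind, h]
      rw [ind_of hc, hcast, Finset.sum_mul]
      refine Finset.sum_congr rfl fun m _ => ?_
      by_cases h : m + 1 ≤ f k
      · rw [ind_of h, ind_of ⟨hc, h⟩]
      · rw [ind_of_not h, ind_of_not (fun hx => h hx.2), zero_mul]
    · rw [ind_of_not hc]
      exact (Finset.sum_eq_zero fun m _ => ind_of_not (fun hx => hc hx.1) _).symm
  rw [Num]
  calc (∑' f : ℕ →₀ ℕ, ind (NS f = n) ((f k : ℝ≥0∞) ^ r * W β E f))
      = ∑' f : ℕ →₀ ℕ, ∑ m ∈ Finset.range n,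
          ind (NS f = n ∧ m + 1 ≤ f k) ((((m + 1) ^ r - m ^ r : ℕ) : ℝ≥0∞) * W β E f) :=
        tsum_congr pointwise
    _ = ∑ m ∈ Finset.range n, ∑' f : ℕ →₀ ℕ,
          ind (NS f = n ∧ m + 1 ≤ f k) ((((m + 1) ^ r - m ^ r : ℕ) : ℝ≥0∞) * W β E f) :=
        Summable.tsum_finsetSum fun m _ => ENNReal.summable
    _ = _ := by
        refine Finset.sum_congr rfl fun m hm => ?_
        have hmn : m + 1 ≤ n := Finset.mem_range.mp hm
        have hshift := Zf_shift β E k (m + 1) (n - (m + 1))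
        rw [Nat.sub_add_cancel hmn] at hshift
        calc (∑' f : ℕ →₀ ℕ,
              ind (NS f = n ∧ m + 1 ≤ f k) ((((m + 1) ^ r - m ^ r : ℕ) : ℝ≥0∞) * W β E f))
            = (((m + 1) ^ r - m ^ r : ℕ) : ℝ≥0∞) * ∑' f : ℕ →₀ ℕ,
              ind (NS f = n ∧ m + 1 ≤ f k) (W β E f) := by
              rw [← ENNReal.tsum_mul_left]
              exact tsum_congr fun f => (mul_ind _ _ _).symm
          _ = _ := by rw [hshift]

lemma W_eq_ofReal (f : ℕ →₀ ℕ) :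
    W β E f = ENNReal.ofReal (Real.exp (-β * f.sum fun k m => (m : ℝ) * E k)) := by
  have h1 : -β * f.sum (fun k m => (m : ℝ) * E k)
      = ∑ j ∈ f.support, (f j : ℝ) * (-β * E j) := by
    rw [Finsupp.sum, Finset.mul_sum]
    exact Finset.sum_congr rfl fun j _ => by ring
  rw [h1, Real.exp_sum,
    ENNReal.ofReal_prod_of_nonneg (fun j _ => (Real.exp_pos _).le)]
  rw [W, Finsupp.prod]
  refine Finset.prod_congr rfl fun j _ => ?_
  rw [Real.exp_nat_mul, ENNReal.ofReal_pow (Real.exp_pos _).le]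
  rfl

lemma tsum_subtype_ind (p : (ℕ →₀ ℕ) → Prop) (g : (ℕ →₀ ℕ) → ℝ≥0∞) :
    (∑' x : {f : ℕ →₀ ℕ // p f}, g x) = ∑' f : ℕ →₀ ℕ, ind (p f) (g f) := by
  refine (tsum_subtype {f | p f} g).trans (tsum_congr fun f => ?_)
  by_cases h : p f <;> simp [ind, h, Set.indicator_apply]

lemma Zcan_eq (n : ℕ) : Zcan β E n = (Zf β E n).toReal := by
  rw [Zcan]
  have h1 : ∀ x : {f : ℕ →₀ ℕ // f.sum (fun _ m => m) = n},
      Real.exp (-β * (x : ℕ →₀ ℕ).sum (fun k m => (m : ℝ) * E k))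
        = (W β E (x : ℕ →₀ ℕ)).toReal := fun x => by
    rw [W_eq_ofReal, ENNReal.toReal_ofReal (Real.exp_pos _).le]
  rw [tsum_congr h1, ← ENNReal.tsum_toReal_eq (fun x => W_ne_top β E _)]
  congr 1
  exact tsum_subtype_ind (fun f => NS f = n) (W β E)

lemma num_eq (k r n : ℕ) :
    (∑' x : {f : ℕ →₀ ℕ // f.sum (fun _ m => m) = n},
        ((x : ℕ →₀ ℕ) k : ℝ) ^ r * Real.exp (-β * (x : ℕ →₀ ℕ).sum (fun j m => (m : ℝ) * E j)))
      = (Num β E k r n).toReal := by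
  have h1 : ∀ x : {f : ℕ →₀ ℕ // f.sum (fun _ m => m) = n},
      ((x : ℕ →₀ ℕ) k : ℝ) ^ r * Real.exp (-β * (x : ℕ →₀ ℕ).sum (fun j m => (m : ℝ) * E j))
        = ((((x : ℕ →₀ ℕ) k : ℝ≥0∞)) ^ r * W β E (x : ℕ →₀ ℕ)).toReal := fun x => by
    rw [W_eq_ofReal, ENNReal.toReal_mul, ENNReal.toReal_pow,
      ENNReal.toReal_ofReal (Real.exp_pos _).le, ENNReal.toReal_natCast]
  rw [tsum_congr h1, ← ENNReal.tsum_toReal_eq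
    (fun x => ENNReal.mul_ne_top (ENNReal.pow_ne_top (ENNReal.natCast_ne_top _)) (W_ne_top β E _))]
  congr 1
  exact tsum_subtype_ind (fun f => NS f = n) (fun f => ((f k : ℝ≥0∞)) ^ r * W β E f)

end BoseProof

open BoseProof ENNReal

/-- For fixed k, V and r ≥ 1 the canonical moments ⟨N_k^r⟩ are monotonically
increasing in the particle number n. -/
theorem canExp_moments_monotone (β : ℝ) (E : ℕ → ℝ) (hβ : 0 < β)
    (hE0 : 0 < E 0) (hE01 : E 0 < E 1) (hEmono : Monotone E)
    (hsum : Summable fun k => Real.exp (-β * E k)) (k : ℕ) (r : ℕ) (hr : 1 ≤ r)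
    (n : ℕ) :
    canExp β E n k (fun m => (m : ℝ) ^ r) ≤
      canExp β E (n + 1) k (fun m => (m : ℝ) ^ r) := by
  classical
  have hZfin : ∀ N, Zf β E N ≠ ∞ := Zf_ne_top β E hsum
  have hZpos : ∀ N, 0 < (Zf β E N).toReal :=
    fun N => ENNReal.toReal_pos (Zf_pos β E N).ne' (hZfin N)
  have hform : ∀ N : ℕ, canExp β E N k (fun m => (m : ℝ) ^ r)
      = ∑ m ∈ Finset.range N, (((m + 1) ^ r - m ^ r : ℕ) : ℝ) *
          ((xw β E k ^ (m + 1) * Zf β E (N - (m + 1))).toReal / (Zf β E N).toReal) := by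
    intro N
    rw [canExp, Zcan_eq]
    have hnum : (∑' x : {f : ℕ →₀ ℕ // f.sum (fun _ m => m) = N},
        (fun m => (m : ℝ) ^ r) ((x : ℕ →₀ ℕ) k)
          * Real.exp (-β * (x : ℕ →₀ ℕ).sum (fun j m => (m : ℝ) * E j)))
        = (Num β E k r N).toReal := num_eq β E k r N
    rw [hnum, Num_eq β E k r hr N, ENNReal.toReal_sum (fun m _ => ENNReal.mul_ne_top
      (ENNReal.natCast_ne_top _) (ENNReal.mul_ne_top
        (ENNReal.pow_ne_top (xw_ne_top β E k)) (hZfin _))), Finset.mul_sum]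
    refine Finset.sum_congr rfl fun m _ => ?_
    rw [ENNReal.toReal_mul, ENNReal.toReal_natCast, div_eq_mul_inv]
    ring
  rw [hform n, hform (n + 1)]
  refine le_trans (Finset.sum_le_sum fun m hm => ?_)
    (Finset.sum_le_sum_of_subset_of_nonneg (Finset.range_subset_range.mpr (by omega))
      (fun m _ _ => mul_nonneg (Nat.cast_nonneg _)
        (div_nonneg ENNReal.toReal_nonneg ENNReal.toReal_nonneg)))
  have hmn : m + 1 ≤ n := Finset.mem_range.mp hm
  refine mul_le_mul_of_nonneg_left ?_ (Nat.cast_nonneg _)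
  rw [div_le_div_iff₀ (hZpos n) (hZpos (n + 1)), ← ENNReal.toReal_mul, ← ENNReal.toReal_mul]
  refine ENNReal.toReal_mono (ENNReal.mul_ne_top (ENNReal.mul_ne_top
    (ENNReal.pow_ne_top (xw_ne_top β E k)) (hZfin _)) (hZfin n)) ?_
  have hidx : n + 1 - (m + 1) = n - (m + 1) + 1 := by omega
  rw [hidx]
  calc xw β E k ^ (m + 1) * Zf β E (n - (m + 1)) * Zf β E (n + 1)
      = xw β E k ^ (m + 1) * (Zf β E (n + 1) * Zf β E (n - (m + 1))) := by ring
    _ ≤ xw β E k ^ (m + 1) * (Zf β E n * Zf β E (n - (m + 1) + 1)) :=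
        mul_le_mul_right (Zf_ratio β E hsum (n - (m + 1)) n (by omega)) _
    _ = xw β E k ^ (m + 1) * Zf β E (n - (m + 1) + 1) * Zf β E n := by ring
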